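/- Let A be a real symmetric tensor of even order k and dimension n. Then λ_min(A) = min{ A x^k : x ∈ ℝⁿ, ‖x‖_k = 1 }, where λ_min(A) is the least H-eigenvalue of A; moreover x achieves this minimum if and only if x is an H-eigenvector of A associated with λ_min(A). -/

import Mathlib

open Finset

/-- `A x^k = ∑_{i₁,…,i_k} a_{i₁…i_k} x_{i₁} ⋯ x_{i_k}` for an order-`k`
dimension-`n` real tensor `A`. -/
def Axk {n k : ℕ} (A : (Fin k → Fin n) → ℝ) (x : Fin n → ℝ) : ℝ :=
  ∑ f : Fin k → Fin n, A f * ∏ j : Fin k, x (f j)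

/-- A tensor is symmetric if its entries are invariant under permutation of indices. -/
def TensorSymm {n k : ℕ} (A : (Fin k → Fin n) → ℝ) : Prop :=
  ∀ (σ : Equiv.Perm (Fin k)) (f : Fin k → Fin n), A (f ∘ σ) = A f

/-- `(A x^{k-1})_i = ∑_{i₂,…,i_k} a_{i i₂ … i_k} x_{i₂} ⋯ x_{i_k}`. -/
def Axk1 {n k : ℕ} [NeZero k] (A : (Fin k → Fin n) → ℝ) (x : Fin n → ℝ) (i : Fin n) : ℝ :=
  ∑ f ∈ Finset.univ.filter (fun f : Fin k → Fin n => f 0 = i),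
    A f * ∏ j ∈ Finset.univ.erase (0 : Fin k), x (f j)

/-- `(λ, x)` is an H-eigenpair of `A`: `x ∈ ℝⁿ \ {0}` and `A x^{k-1} = λ x^{[k-1]}`. -/
def IsHEigenpair {n k : ℕ} [NeZero k] (A : (Fin k → Fin n) → ℝ) (lam : ℝ)
    (x : Fin n → ℝ) : Prop :=
  x ≠ 0 ∧ ∀ i : Fin n, Axk1 A x i = lam * x i ^ (k - 1)

/-- The least H-eigenvalue of the tensor `A`. -/
noncomputable def tensorLamMin {n k : ℕ} [NeZero k] (A : (Fin k → Fin n) → ℝ) : ℝ :=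
  sInf {lam : ℝ | ∃ x : Fin n → ℝ, IsHEigenpair A lam x}

namespace Stmt3Aux
set_option linter.unusedSectionVars false
variable {n k : ℕ} [NeZero k]

lemma G_pos (hk : Even k) {y : Fin n → ℝ} (hy : y ≠ 0) : 0 < ∑ j, y j ^ k := by
  obtain ⟨j0, hj0⟩ : ∃ j, y j ≠ 0 := by
    by_contra h; push_neg at h; exact hy (funext h)
  refine Finset.sum_pos' (fun j _ => hk.pow_nonneg _) ⟨j0, Finset.mem_univ _, ?_⟩
  have : (0:ℝ) < |y j0| ^ k := pow_pos (abs_pos.2 hj0) k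
  rwa [hk.pow_abs] at this

lemma abs_sum_eq (hk : Even k) (y : Fin n → ℝ) : ∑ j, |y j| ^ k = ∑ j, y j ^ k := by
  simp [hk.pow_abs]

lemma Axk_smul (A : (Fin k → Fin n) → ℝ) (c : ℝ) (y : Fin n → ℝ) :
    Axk A (c • y) = c ^ k * Axk A y := by
  unfold Axk
  rw [Finset.mul_sum]
  refine Finset.sum_congr rfl fun f _ => ?_
  simp only [Pi.smul_apply, smul_eq_mul, Finset.prod_mul_distrib, Finset.prod_const,
    Finset.card_univ, Fintype.card_fin]
  ring

lemma continuous_Axk (A : (Fin k → Fin n) → ℝ) : Continuous (Axk A) := by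
  unfold Axk; fun_prop

lemma euler (A : (Fin k → Fin n) → ℝ) (y : Fin n → ℝ) :
    ∑ i, y i * Axk1 A y i = Axk A y := by
  unfold Axk1 Axk
  rw [← Finset.sum_fiberwise (g := fun f : Fin k → Fin n => f 0)
    (f := fun f => A f * ∏ j : Fin k, y (f j))]
  refine Finset.sum_congr rfl fun i _ => ?_
  rw [Finset.mul_sum]
  refine Finset.sum_congr rfl fun f hf => ?_
  simp only [Finset.mem_filter] at hf
  rw [← Finset.mul_prod_erase Finset.univ _ (Finset.mem_univ (0 : Fin k)), hf.2]
  ring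

lemma slot {A : (Fin k → Fin n) → ℝ} (hA : TensorSymm A) (x : Fin n → ℝ) (i : Fin n)
    (j0 : Fin k) :
    ∑ f ∈ Finset.univ.filter (fun f : Fin k → Fin n => f j0 = i),
      A f * ∏ j ∈ Finset.univ.erase j0, x (f j) = Axk1 A x i := by
  unfold Axk1
  set σ := Equiv.swap (0 : Fin k) j0 with hσ
  have hσ0 : σ 0 = j0 := Equiv.swap_apply_left _ _
  have hσj0 : σ j0 = 0 := Equiv.swap_apply_right _ _
  have hσσ : ∀ a, σ (σ a) = a := fun a => Equiv.swap_apply_self _ _ _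
  have hset : (Finset.univ.erase (0 : Fin k)).map σ.toEmbedding = Finset.univ.erase j0 := by
    ext a
    simp only [Finset.mem_map, Finset.mem_erase, Finset.mem_univ, and_true,
      Equiv.coe_toEmbedding]
    constructor
    · rintro ⟨b, hb, rfl⟩
      intro h
      exact hb (σ.injective (h.trans hσ0.symm))
    · intro ha
      exact ⟨σ a, fun h => ha (by rw [← hσ0, ← h, hσσ]), hσσ a⟩
  have hprod : ∀ f : Fin k → Fin n,
      ∏ j ∈ Finset.univ.erase j0, x (f j) =
        ∏ j ∈ Finset.univ.erase (0 : Fin k), x ((f ∘ σ) j) := by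
    intro f
    rw [← hset, Finset.prod_map]
    rfl
  refine Finset.sum_nbij' (fun f => f ∘ σ) (fun f => f ∘ σ) ?_ ?_ ?_ ?_ ?_
  · intro f hf
    simp only [Finset.mem_filter, Finset.mem_univ, true_and] at hf ⊢
    simp [Function.comp, hσ0, hf]
  · intro f hf
    simp only [Finset.mem_filter, Finset.mem_univ, true_and] at hf ⊢
    simp [Function.comp, hσj0, hf]
  · intro f _; funext a; simp [Function.comp, hσσ]
  · intro f _; funext a; simp [Function.comp, hσσ]
  · intro f hf
    rw [hA σ f, hprod f]

lemma hasDerivAt_G (x : Fin n → ℝ) (i : Fin n) :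
    HasDerivAt (fun t : ℝ => ∑ j, (x j + t * (if j = i then (1:ℝ) else 0)) ^ k)
      (k * x i ^ (k - 1)) 0 := by
  have h : ∀ j : Fin n, HasDerivAt (fun t : ℝ => (x j + t * (if j = i then (1:ℝ) else 0)) ^ k)
      ((k : ℝ) * x j ^ (k - 1) * (if j = i then (1:ℝ) else 0)) 0 := by
    intro j
    have h1 : HasDerivAt (fun t : ℝ => x j + t * (if j = i then (1:ℝ) else 0))
        (if j = i then (1:ℝ) else 0) 0 := by
      simpa using ((hasDerivAt_id (0:ℝ)).mul_const (if j = i then (1:ℝ) else 0)).const_add (x j)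
    have := h1.fun_pow k
    simpa using this
  have hsum := HasDerivAt.fun_sum (fun j (_ : j ∈ Finset.univ) => h j)
  refine hsum.congr_deriv ?_
  simp [mul_ite]

lemma hasDerivAt_Axk {A : (Fin k → Fin n) → ℝ} (hA : TensorSymm A) (x : Fin n → ℝ)
    (i : Fin n) :
    HasDerivAt (fun t : ℝ => Axk A (fun j => x j + t * (if j = i then (1:ℝ) else 0)))
      ((k : ℝ) * Axk1 A x i) 0 := by
  have hterm : ∀ f : Fin k → Fin n, HasDerivAt
      (fun t : ℝ => A f * ∏ j : Fin k, (x (f j) + t * (if f j = i then (1:ℝ) else 0)))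
      (A f * ∑ j0 : Fin k, (∏ j ∈ Finset.univ.erase j0, x (f j)) *
        (if f j0 = i then (1:ℝ) else 0)) 0 := by
    intro f
    have hfac : ∀ j : Fin k, HasDerivAt
        (fun t : ℝ => x (f j) + t * (if f j = i then (1:ℝ) else 0))
        (if f j = i then (1:ℝ) else 0) 0 := by
      intro j
      simpa using ((hasDerivAt_id (0:ℝ)).mul_const (if f j = i then (1:ℝ) else 0)).const_add
        (x (f j))
    have hp := HasDerivAt.fun_finsetProd (u := (Finset.univ : Finset (Fin k)))
      (fun j _ => hfac j)
    have hp' := hp.const_mul (A f)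
    refine hp'.congr_deriv (congrArg (A f * ·) ?_)
    refine Finset.sum_congr rfl fun j0 _ => ?_
    simp [smul_eq_mul]
  have hsum := HasDerivAt.fun_sum (fun f (_ : f ∈ (Finset.univ : Finset (Fin k → Fin n))) => hterm f)
  have heq : (fun t : ℝ => Axk A (fun j => x j + t * (if j = i then (1:ℝ) else 0))) =
      (fun t : ℝ => ∑ f : Fin k → Fin n,
        A f * ∏ j : Fin k, (x (f j) + t * (if f j = i then (1:ℝ) else 0))) := rfl
  rw [heq]
  refine hsum.congr_deriv ?_
  have h1 : ∀ f : Fin k → Fin n,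
      A f * ∑ j0 : Fin k, (∏ j ∈ Finset.univ.erase j0, x (f j)) *
        (if f j0 = i then (1:ℝ) else 0)
      = ∑ j0 : Fin k, (if f j0 = i then A f * ∏ j ∈ Finset.univ.erase j0, x (f j) else 0) := by
    intro f
    rw [Finset.mul_sum]
    refine Finset.sum_congr rfl fun j0 _ => ?_
    by_cases h : f j0 = i <;> simp [h]
  simp only [h1]
  rw [Finset.sum_comm]
  have hinner : ∀ j0 : Fin k,
      (∑ f : Fin k → Fin n, if f j0 = i then A f * ∏ j ∈ Finset.univ.erase j0, x (f j) else 0)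
      = Axk1 A x i := by
    intro j0
    rw [← Finset.sum_filter]
    exact slot hA x i j0
  simp only [hinner, Finset.sum_const, Finset.card_univ, Fintype.card_fin, nsmul_eq_mul]

end Stmt3Aux

/-- For a real symmetric tensor `A` of even order `k` and dimension `n`,
`λ_min(A) = min { A x^k : x ∈ ℝⁿ, ‖x‖_k = 1 }`, and a unit vector `x` attains this
minimum if and only if it is an H-eigenvector of `A` associated with `λ_min(A)`. -/
theorem stmt3 {n k : ℕ} [NeZero k] (hn : 0 < n) (hk : Even k)
    (A : (Fin k → Fin n) → ℝ) (hA : TensorSymm A) :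
    IsLeast {r : ℝ | ∃ x : Fin n → ℝ, (∑ i, |x i| ^ k) = 1 ∧ Axk A x = r}
      (tensorLamMin A) ∧
    ∀ x : Fin n → ℝ, (∑ i, |x i| ^ k) = 1 →
      (Axk A x = tensorLamMin A ↔ IsHEigenpair A (tensorLamMin A) x) := by
  classical
  have hk0 : k ≠ 0 := NeZero.ne k
  have hkR : (k : ℝ) ≠ 0 := Nat.cast_ne_zero.2 hk0
  set S : Set (Fin n → ℝ) := {x | (∑ i, |x i| ^ k) = 1} with hSdef
  -- compactness of S
  have hGcont : Continuous (fun x : Fin n → ℝ => ∑ i, |x i| ^ k) := by fun_prop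
  have hSclosed : IsClosed S := by
    have : S = (fun x : Fin n → ℝ => ∑ i, |x i| ^ k) ⁻¹' {1} := by
      ext x; simp [hSdef]
    rw [this]
    exact isClosed_singleton.preimage hGcont
  have hSsub : S ⊆ Metric.closedBall (0 : Fin n → ℝ) 1 := by
    intro x hx
    rw [Metric.mem_closedBall, dist_zero_right]
    rw [pi_norm_le_iff_of_nonneg zero_le_one]
    intro i
    have h1 : |x i| ^ k ≤ 1 := by
      have := Finset.single_le_sum (f := fun j => |x j| ^ k)
        (fun j _ => pow_nonneg (abs_nonneg _) k) (Finset.mem_univ i)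
      rw [hx] at this; exact this
    have := pow_le_one_iff_of_nonneg (abs_nonneg (x i)) hk0
    simpa [Real.norm_eq_abs] using this.1 h1
  have hScomp : IsCompact S :=
    (isCompact_closedBall (0 : Fin n → ℝ) 1).of_isClosed_subset hSclosed hSsub
  have hSne : S.Nonempty := by
    have h1 : (∑ i, |(fun j : Fin n => if j = (⟨0, hn⟩ : Fin n) then (1:ℝ) else 0) i| ^ k)
        = 1 := by
      simp [apply_ite, abs_one, abs_zero, zero_pow hk0, Finset.sum_ite_eq']
    exact ⟨_, h1⟩
  obtain ⟨x₀, hx₀S, hx₀min⟩ := hScomp.exists_isMinOn hSne (Stmt3Aux.continuous_Axk A).continuousOn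
  set m := Axk A x₀ with hm
  have hlow : ∀ y ∈ S, m ≤ Axk A y := fun y hy => hx₀min hy
  -- nonzero unit vectors
  have hne_of_mem : ∀ x ∈ S, x ≠ 0 := by
    intro x hx h0
    rw [h0] at hx
    simp only [hSdef, Set.mem_setOf_eq, Pi.zero_apply, abs_zero, zero_pow hk0,
      Finset.sum_const_zero] at hx
    exact zero_ne_one hx
  -- the Rayleigh-quotient lower bound
  have hratio : ∀ y : Fin n → ℝ, y ≠ 0 → m * ∑ j, y j ^ k ≤ Axk A y := by
    intro y hy
    set g := ∑ j, y j ^ k with hg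
    have hgpos : 0 < g := Stmt3Aux.G_pos hk hy
    set c := g ^ ((k : ℝ)⁻¹) with hc
    have hcpos : 0 < c := Real.rpow_pos_of_pos hgpos _
    have hck : c ^ k = g := by
      rw [hc, ← Real.rpow_natCast (g ^ ((k:ℝ)⁻¹)) k, ← Real.rpow_mul hgpos.le,
        inv_mul_cancel₀ hkR, Real.rpow_one]
    set z := c⁻¹ • y with hz
    have hGz : ∑ j, z j ^ k = 1 := by
      have : ∑ j, z j ^ k = c⁻¹ ^ k * g := by
        rw [hg, Finset.mul_sum]
        refine Finset.sum_congr rfl fun j _ => ?_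
        simp [hz, mul_pow]
      rw [this, inv_pow, hck, inv_mul_cancel₀ hgpos.ne']
    have hzS : z ∈ S := by
      show (∑ i, |z i| ^ k) = 1
      rw [Stmt3Aux.abs_sum_eq hk, hGz]
    have hle : m ≤ Axk A z := hlow z hzS
    rw [hz, Stmt3Aux.Axk_smul, inv_pow, hck] at hle
    have := mul_le_mul_of_nonneg_right hle hgpos.le
    calc m * g ≤ g⁻¹ * Axk A y * g := this
      _ = Axk A y := by field_simp
  -- minimizers are eigenvectors
  have heig : ∀ x ∈ S, Axk A x = m → IsHEigenpair A m x := by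
    intro x hxS hxm
    have hx0 : x ≠ 0 := hne_of_mem x hxS
    have hGx : ∑ j, x j ^ k = 1 := by
      rw [← Stmt3Aux.abs_sum_eq hk]; exact hxS
    refine ⟨hx0, fun i => ?_⟩
    set y : ℝ → (Fin n → ℝ) := fun t => fun j => x j + t * (if j = i then (1:ℝ) else 0)
      with hy
    have hy0 : y 0 = x := by funext j; simp [hy]
    have hycont : Continuous y := by
      apply continuous_pi
      intro j
      fun_prop
    have hyne : ∀ᶠ t in nhds (0:ℝ), y t ≠ 0 := by
      have : ContinuousAt y 0 := hycont.continuousAt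
      have hne : y 0 ≠ 0 := by rw [hy0]; exact hx0
      exact this.eventually_ne hne
    set h : ℝ → ℝ := fun t => Axk A (y t) with hh
    set c : ℝ → ℝ := fun t => ∑ j, (y t) j ^ k with hcdef
    have hc0 : c 0 = 1 := by rw [hcdef]; simp only [hy0]; exact hGx
    have hh0 : h 0 = m := by show Axk A (y 0) = m; rw [hy0, hxm]
    -- local min of quotient
    have hlocmin : IsLocalMin (fun t => h t / c t) 0 := by
      refine hyne.mono fun t ht => ?_
      have hcpos : 0 < c t := Stmt3Aux.G_pos hk ht
      show h 0 / c 0 ≤ h t / c t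
      rw [hh0, hc0, div_one, le_div_iff₀ hcpos]
      exact hratio (y t) ht
    have hdh : HasDerivAt h ((k : ℝ) * Axk1 A x i) 0 := Stmt3Aux.hasDerivAt_Axk hA x i
    have hdc : HasDerivAt c ((k : ℝ) * x i ^ (k - 1)) 0 := Stmt3Aux.hasDerivAt_G x i
    have hcne : c 0 ≠ 0 := by rw [hc0]; exact one_ne_zero
    have hdq := hdh.fun_div hdc hcne
    have hderiv0 : deriv (fun t => h t / c t) 0 = 0 := hlocmin.deriv_eq_zero
    have heq := hdq.deriv
    rw [hderiv0] at heq
    rw [hc0, hh0] at heq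
    have : (k : ℝ) * Axk1 A x i = m * ((k : ℝ) * x i ^ (k - 1)) := by
      field_simp at heq
      linarith
    have h2 : (k : ℝ) * Axk1 A x i = (k : ℝ) * (m * x i ^ (k - 1)) := by
      rw [this]; ring
    exact mul_left_cancel₀ hkR h2
  -- every eigenvalue is ≥ m
  have hev : ∀ lam : ℝ, ∀ x : Fin n → ℝ, IsHEigenpair A lam x → m ≤ lam := by
    intro lam x hpair
    obtain ⟨hx0, hpair⟩ := hpair
    have hgpos : 0 < ∑ j, x j ^ k := Stmt3Aux.G_pos hk hx0
    have heul : Axk A x = lam * ∑ j, x j ^ k := by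
      rw [← Stmt3Aux.euler A x]
      rw [Finset.mul_sum]
      refine Finset.sum_congr rfl fun j _ => ?_
      rw [hpair j]
      have hxk : x j ^ k = x j * x j ^ (k - 1) := (mul_pow_sub_one hk0 (x j)).symm
      rw [hxk]; ring
    have := hratio x hx0
    rw [heul] at this
    exact le_of_mul_le_mul_right this hgpos
  -- least eigenvalue equals m
  have hLeast : IsLeast {lam : ℝ | ∃ x : Fin n → ℝ, IsHEigenpair A lam x} m := by
    constructor
    · exact ⟨x₀, heig x₀ hx₀S rfl⟩
    · rintro lam ⟨x, hx⟩
      exact hev lam x hx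
  have hmin_eq : tensorLamMin A = m := hLeast.csInf_eq
  constructor
  · rw [hmin_eq]
    constructor
    · exact ⟨x₀, hx₀S, rfl⟩
    · rintro r ⟨x, hx, rfl⟩
      exact hlow x hx
  · intro x hx
    rw [hmin_eq]
    constructor
    · intro hxe
      exact heig x hx hxe
    · rintro ⟨-, hpair⟩
      have hGx : ∑ j, x j ^ k = 1 := by
        rw [← Stmt3Aux.abs_sum_eq hk]; exact hx
      rw [← Stmt3Aux.euler A x]
      have : ∀ j : Fin n, x j * Axk1 A x j = m * x j ^ k := by
        intro j
        rw [hpair j]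
        have hxk : x j ^ k = x j * x j ^ (k - 1) := (mul_pow_sub_one hk0 (x j)).symm
        rw [hxk]; ring
      rw [Finset.sum_congr rfl (fun j _ => this j), ← Finset.mul_sum, hGx, mul_one]
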